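/- arXiv:2301.01572 — 6 statements merged into one kernel-verified Lean document; each statement's English description precedes it below -/
import Mathlib

section
/- Let E be a real Hilbert space, f : E → ℝ a differentiable convex function with gradient ∇f, g : E → ℝ a convex function, and F = f + g. Fix η > 0 and P ∈ E, and let p ∈ E be a minimizer over E of the model u ↦ f(P) + ⟨∇f(P), u − P⟩ + (η/2)‖u − P‖² + g(u). If F(p) ≤ f(P) + ⟨∇f(P), p − P⟩ + (η/2)‖p − P‖² + g(p), then for every A ∈ E: F(A) − F(p) ≥ (η/2)‖p − P‖² + η⟨P − A, p − P⟩. -/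
open RealInnerProductSpace

/-- Gradient inequality for a convex differentiable function. -/
lemma grad_ineq_aux {E : Type*} [NormedAddCommGroup E] [InnerProductSpace ℝ E] [CompleteSpace E]
    (f : E → ℝ) (G : E) (x y : E)
    (hf : ConvexOn ℝ Set.univ f) (hG : HasGradientAt f G x) :
    f x + ⟪G, y - x⟫ ≤ f y := by
  have hline : ∀ t : ℝ, HasDerivAt (fun t : ℝ => x + t • (y - x)) (y - x) t := by
    intro t
    simpa using ((hasDerivAt_id t).smul_const (y - x)).const_add x
  set φ : ℝ → ℝ := fun t => f (x + t • (y - x)) with hφ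
  have hφconv : ConvexOn ℝ Set.univ φ := by
    have := hf.comp_affineMap (AffineMap.lineMap x y)
    have heq : φ = f ∘ (AffineMap.lineMap x y) := by
      funext t
      simp [hφ, AffineMap.lineMap_apply, add_comm]
    rw [heq]
    simpa using this
  have hder : HasDerivAt φ ⟪G, y - x⟫ 0 := by
    have hG0 : HasFDerivAt f ((InnerProductSpace.toDual ℝ E) G) (x + (0:ℝ) • (y - x)) := by
      simpa using hG.hasFDerivAt
    have := hG0.comp_hasDerivAt 0 (hline 0)
    simpa [hφ, Function.comp_def] using this
  have hslope := hφconv.le_slope_of_hasDerivAt (Set.mem_univ 0) (Set.mem_univ 1)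
    one_pos hder
  have : slope φ 0 1 = f y - f x := by
    simp [slope_def_field, hφ]
  rw [this] at hslope
  linarith

/-- Lemma 1: key descent lemma for the proximal model. -/
theorem stmt_0 {E : Type*} [NormedAddCommGroup E] [InnerProductSpace ℝ E] [CompleteSpace E]
    (f g : E → ℝ) (f' : E → E)
    (hf : ConvexOn ℝ Set.univ f)
    (hdiff : ∀ x, HasGradientAt f (f' x) x)
    (hg : ConvexOn ℝ Set.univ g)
    (η : ℝ) (hη : 0 < η) (P p : E)
    (hmin : ∀ u : E,
      f P + ⟪f' P, p - P⟫ + η / 2 * ‖p - P‖ ^ 2 + g p ≤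
      f P + ⟪f' P, u - P⟫ + η / 2 * ‖u - P‖ ^ 2 + g u)
    (hmaj : f p + g p ≤ f P + ⟪f' P, p - P⟫ + η / 2 * ‖p - P‖ ^ 2 + g p) :
    ∀ A : E, (f A + g A) - (f p + g p) ≥
      η / 2 * ‖p - P‖ ^ 2 + η * ⟪P - A, p - P⟫ := by
  intro A
  -- First-order optimality of p for the model:
  have hopt : ∀ u : E, 0 ≤ ⟪f' P, u - p⟫ + η * ⟪p - P, u - p⟫ + (g u - g p) := by
    intro u
    have key : ∀ t : ℝ, t ∈ Set.Ioc (0:ℝ) 1 →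
        0 ≤ ⟪f' P, u - p⟫ + η * ⟪p - P, u - p⟫ + (g u - g p) + η * t / 2 * ‖u - p‖ ^ 2 := by
      intro t ht
      obtain ⟨ht0, ht1⟩ := ht
      set v : E := p + t • (u - p) with hv
      have hmin' := hmin v
      -- convexity of g along the segment
      have hgseg : g v ≤ (1 - t) * g p + t * g u := by
        have := hg.2 (Set.mem_univ p) (Set.mem_univ u) (by linarith : (0:ℝ) ≤ 1 - t)
          ht0.le (by ring)
        simpa [hv, smul_smul, sub_smul, one_smul, smul_sub] using
          le_of_eq_of_le (by congr 1; module) this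
      -- expand the quadratic
      have hvP : v - P = (p - P) + t • (u - p) := by rw [hv]; abel
      have hnorm : ‖v - P‖ ^ 2 = ‖p - P‖ ^ 2 + 2 * (t * ⟪p - P, u - p⟫)
          + t ^ 2 * ‖u - p‖ ^ 2 := by
        rw [hvP, norm_add_sq_real, real_inner_smul_right, norm_smul]
        rw [mul_pow, Real.norm_eq_abs, sq_abs]
      have hinner : ⟪f' P, v - P⟫ = ⟪f' P, p - P⟫ + t * ⟪f' P, u - p⟫ := by
        rw [hvP, inner_add_right, real_inner_smul_right]
      rw [hinner, hnorm] at hmin'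
      have h2 : 0 ≤ t * ⟪f' P, u - p⟫ + η * (t * ⟪p - P, u - p⟫)
          + η / 2 * (t ^ 2 * ‖u - p‖ ^ 2) + t * (g u - g p) := by nlinarith [hgseg]
      have := mul_le_mul_of_nonneg_left h2 (le_of_lt (inv_pos.mpr ht0))
      have ht0' : t ≠ 0 := ne_of_gt ht0
      nlinarith [this, sq_nonneg t]
    -- let t → 0⁺
    have htend : Filter.Tendsto
        (fun t : ℝ => ⟪f' P, u - p⟫ + η * ⟪p - P, u - p⟫ + (g u - g p) + η * t / 2 * ‖u - p‖ ^ 2)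
        (nhdsWithin 0 (Set.Ioi (0:ℝ)))
        (nhds (⟪f' P, u - p⟫ + η * ⟪p - P, u - p⟫ + (g u - g p))) := by
      have : Filter.Tendsto
          (fun t : ℝ => ⟪f' P, u - p⟫ + η * ⟪p - P, u - p⟫ + (g u - g p) + η * t / 2 * ‖u - p‖ ^ 2)
          (nhds 0)
          (nhds (⟪f' P, u - p⟫ + η * ⟪p - P, u - p⟫ + (g u - g p) + η * 0 / 2 * ‖u - p‖ ^ 2)) := by
        exact Continuous.tendsto (by continuity) 0
      simpa using this.mono_left nhdsWithin_le_nhds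
    refine ge_of_tendsto htend ?_
    filter_upwards [Ioc_mem_nhdsGT_of_mem (by norm_num : (0:ℝ) ∈ Set.Ico (0:ℝ) 1)] with t ht
    exact key t ht
  -- gradient inequality for f at P evaluated at A
  have hgradA : f P + ⟪f' P, A - P⟫ ≤ f A := grad_ineq_aux f (f' P) P A hf (hdiff P)
  have hoptA := hopt A
  -- algebra
  have hAexp : ⟪f' P, A - P⟫ = ⟪f' P, A - p⟫ + ⟪f' P, p - P⟫ := by
    rw [← inner_add_right]; congr 1; abel
  have hPA : ⟪P - A, p - P⟫ = -⟪A - p, p - P⟫ - ‖p - P‖ ^ 2 := by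
    have : P - A = -(A - p) - (p - P) := by abel
    rw [this, inner_sub_left, inner_neg_left, ← real_inner_self_eq_norm_sq]
  rw [hPA]
  nlinarith [hoptA, hgradA, hmaj, hAexp, real_inner_comm (p - P) (A - p)]
end

section
/- Let E be a real Hilbert space, f : E → ℝ a differentiable convex function with gradient ∇f, g : E → ℝ a convex function, and F = f + g. Let P* be a minimizer of F over E, let L_max > 0, and let (P^k)_{k≥0} be a sequence in E together with parameters η_k satisfying, for every k ≥ 1: (i) 0 < η_k ≤ L_max; (ii) P^k minimizes the model u ↦ f(P^{k−1}) + ⟨∇f(P^{k−1}), u − P^{k−1}⟩ + (η_k/2)‖u − P^{k−1}‖² + g(u) over E; (iii) F(P^k) ≤ f(P^{k−1}) + ⟨∇f(P^{k−1}), P^k − P^{k−1}⟩ + (η_k/2)‖P^k − P^{k−1}‖² + g(P^k). Then for every k ≥ 1: F(P^k) − F(P*) ≤ L_max · ‖P^0 − P*‖² / (2k). -/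
open RealInnerProductSpace

/-- If `0 ≤ A + t * B` for all small positive `t`, then `0 ≤ A`. -/
lemma aux_small_t (A B : ℝ) (h : ∀ t : ℝ, 0 < t → t ≤ 1 → 0 ≤ A + t * B) : 0 ≤ A := by
  by_contra hA
  push_neg at hA
  rcases le_or_gt B 0 with hB | hB
  · have := h 1 one_pos le_rfl
    linarith
  · have ht0 : 0 < min 1 (-A / (2 * B)) :=
      lt_min one_pos (div_pos (by linarith) (by linarith))
    have ht1 : min 1 (-A / (2 * B)) ≤ 1 := min_le_left _ _
    have h2 := h _ ht0 ht1
    have h3 : min 1 (-A / (2 * B)) * B ≤ (-A / (2 * B)) * B :=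
      mul_le_mul_of_nonneg_right (min_le_right _ _) hB.le
    have h4 : (-A / (2 * B)) * B = -A / 2 := by
      field_simp
    nlinarith

lemma norm_add_smul_sq {E : Type*} [NormedAddCommGroup E] [InnerProductSpace ℝ E]
    (v d : E) (t : ℝ) :
    ‖v + t • d‖ ^ 2 = ‖v‖ ^ 2 + 2 * t * ⟪v, d⟫ + t ^ 2 * ‖d‖ ^ 2 := by
  rw [norm_add_sq_real, real_inner_smul_right, norm_smul]
  simp [mul_pow, sq_abs]
  ring

/-- First-order inequality for a convex differentiable function. -/
lemma grad_convex_ineq {E : Type*} [NormedAddCommGroup E] [InnerProductSpace ℝ E]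
    [CompleteSpace E] {f : E → ℝ} (hf : ConvexOn ℝ Set.univ f) {y gy : E} (h : HasGradientAt f gy y) (u : E) :
    f y + ⟪gy, u - y⟫ ≤ f u := by
  set φ : ℝ → ℝ := fun t => f (y + t • (u - y)) with hφ
  have hline : HasDerivAt (fun t : ℝ => y + t • (u - y)) (u - y) 0 := by
    simpa using ((hasDerivAt_id (0:ℝ)).smul_const (u - y)).const_add y
  have hcomp : HasDerivAt φ ⟪gy, u - y⟫ 0 := by
    have hfd := h.hasFDerivAt
    have : HasFDerivAt f (InnerProductSpace.toDual ℝ E gy) (y + (0:ℝ) • (u - y)) := by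
      simpa using hfd
    have hc := this.comp_hasDerivAt 0 hline
    simpa [φ, InnerProductSpace.toDual_apply_apply, Function.comp_def] using hc
  have hslope : Filter.Tendsto (slope φ 0) (nhdsWithin 0 (Set.Ioi 0)) (nhds ⟪gy, u - y⟫) := by
    have := hasDerivAt_iff_tendsto_slope.mp hcomp
    exact this.mono_left (nhdsWithin_mono 0 (fun t ht => ne_of_gt ht))
  have hle : ⟪gy, u - y⟫ ≤ f u - f y := by
    refine le_of_tendsto hslope ?_
    filter_upwards [Ioc_mem_nhdsGT_of_mem (by constructor <;> norm_num : (0:ℝ) ∈ Set.Ico 0 1)]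
      with t ht
    obtain ⟨ht0, ht1⟩ := ht
    have hconv := hf.2 (Set.mem_univ y) (Set.mem_univ u) (by linarith : (0:ℝ) ≤ 1 - t) ht0.le
      (by ring)
    have hpt : y + t • (u - y) = (1 - t) • y + t • u := by
      rw [smul_sub, sub_smul, one_smul]
      abel
    have hφt : φ t ≤ (1 - t) * f y + t * f u := by
      rw [hφ]; simp only [hpt]; exact hconv
    have hφ0 : φ 0 = f y := by simp [hφ]
    rw [slope_def_field, sub_zero, div_le_iff₀ ht0, hφ0]
    nlinarith
  linarith

/-- Theorem 4.1: O(1/k) convergence of ISTA with modified stepsize search. -/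
theorem stmt_1 {E : Type*} [NormedAddCommGroup E] [InnerProductSpace ℝ E] [CompleteSpace E]
    (f g : E → ℝ) (f' : E → E)
    (hf : ConvexOn ℝ Set.univ f)
    (hdiff : ∀ x, HasGradientAt f (f' x) x)
    (hg : ConvexOn ℝ Set.univ g)
    (Pstar : E) (hPstar : ∀ x : E, f Pstar + g Pstar ≤ f x + g x)
    (Lmax : ℝ) (hLmax : 0 < Lmax)
    (P : ℕ → E) (η : ℕ → ℝ)
    (hηpos : ∀ k : ℕ, 1 ≤ k → 0 < η k)
    (hηle : ∀ k : ℕ, 1 ≤ k → η k ≤ Lmax)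
    (hmin : ∀ k : ℕ, 1 ≤ k → ∀ u : E,
      f (P (k - 1)) + ⟪f' (P (k - 1)), P k - P (k - 1)⟫
        + η k / 2 * ‖P k - P (k - 1)‖ ^ 2 + g (P k) ≤
      f (P (k - 1)) + ⟪f' (P (k - 1)), u - P (k - 1)⟫
        + η k / 2 * ‖u - P (k - 1)‖ ^ 2 + g u)
    (hmaj : ∀ k : ℕ, 1 ≤ k →
      f (P k) + g (P k) ≤
      f (P (k - 1)) + ⟪f' (P (k - 1)), P k - P (k - 1)⟫
        + η k / 2 * ‖P k - P (k - 1)‖ ^ 2 + g (P k)) :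
    ∀ k : ℕ, 1 ≤ k →
      (f (P k) + g (P k)) - (f Pstar + g Pstar) ≤
        Lmax * ‖P 0 - Pstar‖ ^ 2 / (2 * k) := by
  -- key descent inequality
  have key : ∀ k : ℕ, 1 ≤ k → ∀ u : E,
      f (P k) + g (P k) ≤ f u + g u
        + η k / 2 * (‖u - P (k - 1)‖ ^ 2 - ‖u - P k‖ ^ 2) := by
    intro k hk u
    set y := P (k - 1) with hy
    set x := P k with hx
    set c := η k with hc
    -- first-order optimality of x for the model
    have hA : 0 ≤ ⟪f' y, u - x⟫ + c * ⟪x - y, u - x⟫ + (g u - g x) := by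
      apply aux_small_t _ (c / 2 * ‖u - x‖ ^ 2)
      intro t ht0 ht1
      have hm := hmin k hk (x + t • (u - x))
      have hpt : x + t • (u - x) = (1 - t) • x + t • u := by
        rw [smul_sub, sub_smul, one_smul]
        abel
      have hgc : g (x + t • (u - x)) ≤ (1 - t) * g x + t * g u := by
        rw [hpt]
        exact hg.2 (Set.mem_univ x) (Set.mem_univ u) (by linarith) ht0.le (by ring)
      have e1 : x + t • (u - x) - y = (x - y) + t • (u - x) := by
        rw [add_sub_right_comm]
      rw [e1, norm_add_smul_sq, inner_add_right, real_inner_smul_right] at hm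
      have h2 : 0 ≤ t * ((⟪f' y, u - x⟫ + c * ⟪x - y, u - x⟫ + (g u - g x))
          + t * (c / 2 * ‖u - x‖ ^ 2)) := by nlinarith
      nlinarith
    have hgrad := grad_convex_ineq hf (hdiff y) u
    have hmaj' := hmaj k hk
    have e2 : u - y = (u - x) + (x - y) := by abel
    have e3 : ⟪f' y, u - y⟫ = ⟪f' y, u - x⟫ + ⟪f' y, x - y⟫ := by
      rw [e2, inner_add_right]
    have e4 : ‖u - y‖ ^ 2 = ‖u - x‖ ^ 2 + 2 * ⟪u - x, x - y⟫ + ‖x - y‖ ^ 2 := by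
      rw [e2, norm_add_sq_real]
    have e5 : ⟪x - y, u - x⟫ = ⟪u - x, x - y⟫ := real_inner_comm _ _
    rw [← hx, ← hc, ← hy] at hmaj'
    rw [e5] at hA
    rw [e3] at hgrad
    rw [e4]
    nlinarith [hmaj', hgrad, hA]
  -- one-step bound at the minimizer
  have hstar : ∀ k : ℕ, 1 ≤ k →
      f (P k) + g (P k) - (f Pstar + g Pstar) ≤
        Lmax / 2 * (‖P (k - 1) - Pstar‖ ^ 2 - ‖P k - Pstar‖ ^ 2) := by
    intro k hk
    have h1 := key k hk Pstar
    rw [norm_sub_rev Pstar (P (k-1)), norm_sub_rev Pstar (P k)] at h1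
    have h2 := hPstar (P k)
    have hp := hηpos k hk
    have hη := hηle k hk
    have hΔ : 0 ≤ ‖P (k - 1) - Pstar‖ ^ 2 - ‖P k - Pstar‖ ^ 2 := by nlinarith
    nlinarith [mul_nonneg (sub_nonneg.mpr hη) hΔ]
  -- monotonicity
  have hmono : ∀ k : ℕ, 1 ≤ k → f (P k) + g (P k) ≤ f (P (k - 1)) + g (P (k - 1)) := by
    intro k hk
    have h1 := key k hk (P (k - 1))
    have h0 : ‖P (k - 1) - P (k - 1)‖ ^ 2 = 0 := by simp
    nlinarith [hηpos k hk, sq_nonneg ‖P (k - 1) - P k‖,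
      mul_nonneg (hηpos k hk).le (sq_nonneg ‖P (k - 1) - P k‖)]
  -- induction
  have main : ∀ k : ℕ, (k : ℝ) * (f (P k) + g (P k) - (f Pstar + g Pstar)) ≤
      Lmax / 2 * (‖P 0 - Pstar‖ ^ 2 - ‖P k - Pstar‖ ^ 2) := by
    intro k
    induction k with
    | zero => simp
    | succ n ih =>
      have hk1 : 1 ≤ n + 1 := Nat.le_add_left 1 n
      have hs := hstar (n + 1) hk1
      have hm := hmono (n + 1) hk1
      simp only [Nat.add_sub_cancel] at hs hm
      have hDle : f (P (n + 1)) + g (P (n + 1)) - (f Pstar + g Pstar) ≤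
          f (P n) + g (P n) - (f Pstar + g Pstar) := by linarith
      have hmul := mul_le_mul_of_nonneg_left hDle (Nat.cast_nonneg n : (0:ℝ) ≤ n)
      push_cast
      nlinarith [hPstar (P (n + 1))]
  intro k hk
  have hk' : (0:ℝ) < k := by exact_mod_cast hk
  have := main k
  rw [le_div_iff₀ (by positivity : (0:ℝ) < 2 * (k:ℝ))]
  nlinarith [mul_nonneg hLmax.le (sq_nonneg ‖P k - Pstar‖)]
end

section
/- Let E be a real Hilbert space, g : E → ℝ convex, and f : E → ℝ differentiable with gradient ∇f, σ-strongly convex and L-smooth; set F = f + g. Fix α > 0, y ∈ E, and let p ∈ E be a minimizer over E of u ↦ f(y) + ⟨∇f(y), u − y⟩ + g(u) + (α/2)‖u − y‖². If f(p) ≤ f(y) + ⟨∇f(y), p − y⟩ + (α/2)‖p − y‖², then for every x ∈ E: F(x) − F(p) ≥ (α/2)‖x − p‖² − (α/2)‖x − y‖² + f(x) − f(y) − ⟨∇f(y), x − y⟩. -/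
open RealInnerProductSpace

lemma quad_id {E : Type*} [NormedAddCommGroup E] [InnerProductSpace ℝ E]
    (a b : E) (t : ℝ) :
    ‖(1 - t) • a + t • b‖ ^ 2
      = (1 - t) * ‖a‖ ^ 2 + t * ‖b‖ ^ 2 - t * (1 - t) * ‖a - b‖ ^ 2 := by
  have h : ∀ v : E, ‖v‖ ^ 2 = ⟪v, v⟫ := fun v => (real_inner_self_eq_norm_sq v).symm
  simp only [h, inner_add_add_self, inner_sub_sub_self, real_inner_smul_left,
    real_inner_smul_right]
  ring

/-- Lemma 4.2: fundamental proximal inequality under strong convexity and smoothness. -/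
theorem stmt_2 {E : Type*} [NormedAddCommGroup E] [InnerProductSpace ℝ E] [CompleteSpace E]
    (f g : E → ℝ) (f' : E → E) (σ L : ℝ)
    (hg : ConvexOn ℝ Set.univ g)
    (hdiff : ∀ x, HasGradientAt f (f' x) x)
    (hsc : ConvexOn ℝ Set.univ (fun x => f x - σ / 2 * ‖x‖ ^ 2))
    (hsm : ConvexOn ℝ Set.univ (fun x => L / 2 * ‖x‖ ^ 2 - f x))
    (α : ℝ) (hα : 0 < α) (y p : E)
    (hmin : ∀ u : E,
      f y + ⟪f' y, p - y⟫ + g p + α / 2 * ‖p - y‖ ^ 2 ≤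
      f y + ⟪f' y, u - y⟫ + g u + α / 2 * ‖u - y‖ ^ 2)
    (hineq : f p ≤ f y + ⟪f' y, p - y⟫ + α / 2 * ‖p - y‖ ^ 2) :
    ∀ x : E, (f x + g x) - (f p + g p) ≥
      α / 2 * ‖x - p‖ ^ 2 - α / 2 * ‖x - y‖ ^ 2
        + f x - f y - ⟪f' y, x - y⟫ := by
  intro x
  set A := ⟪f' y, p - y⟫ with hA
  set B := ⟪f' y, x - y⟫ with hB
  set K := ‖x - p‖ ^ 2 with hK
  have hK0 : 0 ≤ K := by positivity
  set D := g x + B + α / 2 * ‖x - y‖ ^ 2 - (g p + A + α / 2 * ‖p - y‖ ^ 2) with hD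
  clear_value A B K D
  -- step inequality for all t ∈ (0,1]
  have hstep : ∀ t : ℝ, 0 < t → t ≤ 1 → α / 2 * (1 - t) * K ≤ D := by
    intro t ht0 ht1
    have h1t : 0 ≤ 1 - t := by linarith
    set u : E := (1 - t) • p + t • x with hu
    have huy : u - y = (1 - t) • (p - y) + t • (x - y) := by
      simp [hu, smul_sub]
      module
    have hnorm : ‖u - y‖ ^ 2
        = (1 - t) * ‖p - y‖ ^ 2 + t * ‖x - y‖ ^ 2 - t * (1 - t) * K := by
      rw [huy, quad_id]
      have : (p - y) - (x - y) = -(x - p) := by abel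
      rw [this, norm_neg, hK]
    have hinner : ⟪f' y, u - y⟫ = (1 - t) * A + t * B := by
      rw [huy, inner_add_right, real_inner_smul_right, real_inner_smul_right, hA, hB]
    have hgu : g u ≤ (1 - t) * g p + t * g x := by
      have := hg.2 (Set.mem_univ p) (Set.mem_univ x) h1t ht0.le (by ring)
      simpa using this
    have hm := hmin u
    rw [hnorm, hinner] at hm
    nlinarith [hm, hgu]
  have hD0 : 0 ≤ D := by have := hstep 1 one_pos le_rfl; nlinarith
  -- conclude D ≥ α/2 * K by taking t → 0
  have hkey : α / 2 * K ≤ D := by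
    by_contra h
    push_neg at h
    set K' := α / 2 * K with hK'
    clear_value K'
    have hK'pos : 0 < K' := lt_of_le_of_lt hD0 h
    set t := (K' - D) / (2 * K') with ht
    have ht0 : 0 < t := by
      apply div_pos (by linarith) (by linarith)
    have ht1 : t ≤ 1 := by
      rw [ht, div_le_one (by linarith)]
      linarith
    have := hstep t ht0 ht1
    have h1t : α / 2 * (1 - t) * K = K' - t * K' := by rw [hK']; ring
    rw [h1t] at this
    have htK : t * K' = (K' - D) / 2 := by
      rw [ht]; field_simp
    rw [htK] at this
    linarith
  -- combine with hineq
  linarith [hineq, hkey]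
end

section
/- Let E be a real Hilbert space, g : E → ℝ convex, and f : E → ℝ differentiable with gradient ∇f, σ-strongly convex and L-smooth with 0 < σ ≤ L; set F = f + g. Fix y ∈ E and let p ∈ E be a minimizer over E of u ↦ f(y) + ⟨∇f(y), u − y⟩ + g(u) + (L/2)‖u − y‖². Then for every x ∈ E: F(x) − F(p) ≥ (L/2)‖x − p‖² − (L/2)‖x − y‖² + (σ/2)‖x − y‖². -/
open RealInnerProductSpace

lemma tangent_aux {E : Type*} [NormedAddCommGroup E] [InnerProductSpace ℝ E]
    {h : E → ℝ} {D : E →L[ℝ] ℝ} {y : E}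
    (hc : ConvexOn ℝ Set.univ h) (hd : HasFDerivAt h D y) (x : E) :
    h y + D (x - y) ≤ h x := by
  have hline : HasDerivAt (fun t : ℝ => y + t • (x - y)) (x - y) 0 := by
    simpa using ((hasDerivAt_id (0:ℝ)).smul_const (x - y)).const_add y
  have hd' : HasFDerivAt h D (y + (0:ℝ) • (x - y)) := by simpa using hd
  have hφ : HasDerivAt (fun t : ℝ => h (y + t • (x - y))) (D (x - y)) 0 :=
    hd'.comp_hasDerivAt 0 hline
  have hcv : ConvexOn ℝ Set.univ (fun t : ℝ => h (y + t • (x - y))) := by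
    have h2 := hc.comp_affineMap (AffineMap.lineMap y x : ℝ →ᵃ[ℝ] E)
    simp only [Set.preimage_univ] at h2
    have hfe : (fun t : ℝ => h (y + t • (x - y))) = h ∘ AffineMap.lineMap y x := by
      ext t
      simp [AffineMap.lineMap_apply, add_comm]
    rw [hfe]
    exact h2
  have hs := hcv.le_slope_of_hasDerivAt (Set.mem_univ 0) (Set.mem_univ 1) one_pos hφ
  simp [slope] at hs
  have hD : D (x - y) = D x - D y := map_sub D x y
  linarith

lemma sq_fderiv {E : Type*} [NormedAddCommGroup E] [InnerProductSpace ℝ E] (y : E) :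
    HasFDerivAt (fun x : E => ‖x‖ ^ 2)
      ((fderivInnerCLM ℝ (y, y)).comp
        ((ContinuousLinearMap.id ℝ E).prod (ContinuousLinearMap.id ℝ E))) y := by
  have h : HasFDerivAt (fun x : E => ⟪x, x⟫)
      ((fderivInnerCLM ℝ (y, y)).comp
        ((ContinuousLinearMap.id ℝ E).prod (ContinuousLinearMap.id ℝ E))) y :=
    (hasFDerivAt_id y).inner ℝ (hasFDerivAt_id y)
  convert h using 2 with x
  exact (real_inner_self_eq_norm_sq x).symm

lemma strong_tangent {E : Type*} [NormedAddCommGroup E] [InnerProductSpace ℝ E] [CompleteSpace E]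
    {f : E → ℝ} {v y : E} (σ : ℝ)
    (hsc : ConvexOn ℝ Set.univ (fun x => f x - σ / 2 * ‖x‖ ^ 2))
    (hd : HasGradientAt f v y) (x : E) :
    f y + ⟪v, x - y⟫ + σ / 2 * ‖x - y‖ ^ 2 ≤ f x := by
  have hD : HasFDerivAt (fun x => f x - σ / 2 * ‖x‖ ^ 2)
      (InnerProductSpace.toDual ℝ E v - (σ / 2) • _) y :=
    (hasGradientAt_iff_hasFDerivAt.mp hd).sub ((sq_fderiv y).const_smul (σ / 2))
  have ht := tangent_aux hsc hD x
  simp [InnerProductSpace.toDual_apply_apply, fderivInnerCLM_apply, inner_sub_right,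
    real_inner_comm y x] at ht
  have hid : ‖x - y‖ ^ 2 = ‖x‖ ^ 2 - 2 * ⟪x, y⟫ + ‖y‖ ^ 2 := by
    rw [← real_inner_self_eq_norm_sq, ← real_inner_self_eq_norm_sq, ← real_inner_self_eq_norm_sq]
    simp only [inner_sub_left, inner_sub_right, real_inner_comm x y]
    ring
  have hvy : ⟪v, x - y⟫ = ⟪v, x⟫ - ⟪v, y⟫ := inner_sub_right v x y
  have h1 : ⟪x - y, y⟫ = ⟪x, y⟫ - ⟪y, y⟫ := inner_sub_left x y y
  have h2 : ⟪y, x⟫ = ⟪x, y⟫ := real_inner_comm x y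
  have h3 : ⟪y, y⟫ = ‖y‖ ^ 2 := real_inner_self_eq_norm_sq y
  rw [h1, h2, h3] at ht
  rw [hvy, hid]
  ring_nf at ht ⊢
  linarith

lemma smooth_tangent {E : Type*} [NormedAddCommGroup E] [InnerProductSpace ℝ E] [CompleteSpace E]
    {f : E → ℝ} {v y : E} (L : ℝ)
    (hsm : ConvexOn ℝ Set.univ (fun x => L / 2 * ‖x‖ ^ 2 - f x))
    (hd : HasGradientAt f v y) (x : E) :
    f x ≤ f y + ⟪v, x - y⟫ + L / 2 * ‖x - y‖ ^ 2 := by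
  have hD : HasFDerivAt (fun x => L / 2 * ‖x‖ ^ 2 - f x)
      ((L / 2) • _ - InnerProductSpace.toDual ℝ E v) y :=
    ((sq_fderiv y).const_smul (L / 2)).sub (hasGradientAt_iff_hasFDerivAt.mp hd)
  have ht := tangent_aux hsm hD x
  simp [InnerProductSpace.toDual_apply_apply, fderivInnerCLM_apply, inner_sub_right,
    real_inner_comm y x] at ht
  have hid : ‖x - y‖ ^ 2 = ‖x‖ ^ 2 - 2 * ⟪x, y⟫ + ‖y‖ ^ 2 := by
    rw [← real_inner_self_eq_norm_sq, ← real_inner_self_eq_norm_sq, ← real_inner_self_eq_norm_sq]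
    simp only [inner_sub_left, inner_sub_right, real_inner_comm x y]
    ring
  have hvy : ⟪v, x - y⟫ = ⟪v, x⟫ - ⟪v, y⟫ := inner_sub_right v x y
  have h1 : ⟪x - y, y⟫ = ⟪x, y⟫ - ⟪y, y⟫ := inner_sub_left x y y
  have h2 : ⟪y, x⟫ = ⟪x, y⟫ := real_inner_comm x y
  have h3 : ⟪y, y⟫ = ‖y‖ ^ 2 := real_inner_self_eq_norm_sq y
  rw [h1, h2, h3] at ht
  rw [hvy, hid]
  ring_nf at ht ⊢
  linarith

lemma combo_norm {E : Type*} [NormedAddCommGroup E] [InnerProductSpace ℝ E] (a b : E) (t : ℝ) :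
    ‖(1 - t) • a + t • b‖ ^ 2 = (1 - t) * ‖a‖ ^ 2 + t * ‖b‖ ^ 2 - t * (1 - t) * ‖b - a‖ ^ 2 := by
  simp only [← real_inner_self_eq_norm_sq]
  simp only [inner_add_left, inner_add_right, inner_sub_left, inner_sub_right,
    real_inner_smul_left, real_inner_smul_right, real_inner_comm a b]
  ring

lemma min_strong {E : Type*} [NormedAddCommGroup E] [InnerProductSpace ℝ E]
    (g : E → ℝ) (v y p : E) (L : ℝ)
    (hg : ConvexOn ℝ Set.univ g)
    (hmin : ∀ u, ⟪v, p - y⟫ + g p + L / 2 * ‖p - y‖ ^ 2 ≤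
      ⟪v, u - y⟫ + g u + L / 2 * ‖u - y‖ ^ 2) (x : E) :
    ⟪v, p - y⟫ + g p + L / 2 * ‖p - y‖ ^ 2 + L / 2 * ‖x - p‖ ^ 2 ≤
      ⟪v, x - y⟫ + g x + L / 2 * ‖x - y‖ ^ 2 := by
  set Qp := ⟪v, p - y⟫ + g p + L / 2 * ‖p - y‖ ^ 2 with hQp
  set Qx := ⟪v, x - y⟫ + g x + L / 2 * ‖x - y‖ ^ 2 with hQx
  have key : ∀ t ∈ Set.Ioo (0:ℝ) 1, Qp + L / 2 * (1 - t) * ‖x - p‖ ^ 2 ≤ Qx := by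
    rintro t ⟨ht0, ht1⟩
    have hm := hmin ((1 - t) • p + t • x)
    have hgm : g ((1 - t) • p + t • x) ≤ (1 - t) * g p + t * g x :=
      hg.2 trivial trivial (by linarith) ht0.le (by ring)
    have hmy : ((1 - t) • p + t • x) - y = (1 - t) • (p - y) + t • (x - y) := by
      simp [smul_sub, sub_smul]; abel
    have hnorm : ‖((1 - t) • p + t • x) - y‖ ^ 2 =
        (1 - t) * ‖p - y‖ ^ 2 + t * ‖x - y‖ ^ 2 - t * (1 - t) * ‖x - p‖ ^ 2 := by
      rw [hmy, combo_norm]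
      have : (x - y) - (p - y) = x - p := by abel
      rw [this]
    have hinner : ⟪v, ((1 - t) • p + t • x) - y⟫ = (1 - t) * ⟪v, p - y⟫ + t * ⟪v, x - y⟫ := by
      rw [hmy]
      simp [inner_add_right, real_inner_smul_right]
    rw [hnorm, hinner] at hm
    nlinarith [hm, hgm, ht0, sq_nonneg ‖x - p‖]
  have htend : Filter.Tendsto (fun t : ℝ => Qp + L / 2 * (1 - t) * ‖x - p‖ ^ 2)
      (nhdsWithin 0 (Set.Ioi 0)) (nhds (Qp + L / 2 * (1 - 0) * ‖x - p‖ ^ 2)) := by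
    apply Filter.Tendsto.mono_left _ nhdsWithin_le_nhds
    exact Continuous.tendsto (by continuity) 0
  have hev : ∀ᶠ t in nhdsWithin (0:ℝ) (Set.Ioi 0),
      Qp + L / 2 * (1 - t) * ‖x - p‖ ^ 2 ≤ Qx := by
    filter_upwards [Ioo_mem_nhdsGT_of_mem (Set.left_mem_Ico.mpr one_pos)] with t ht
    exact key t ht
  have := le_of_tendsto htend hev
  simpa using this


/-- Eq. (4.14): the proximal inequality with stepsize 1/L under σ-strong convexity
and L-smoothness. -/
theorem stmt_5 {E : Type*} [NormedAddCommGroup E] [InnerProductSpace ℝ E] [CompleteSpace E]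
    (f g : E → ℝ) (f' : E → E) (σ L : ℝ)
    (hσ : 0 < σ) (hσL : σ ≤ L)
    (hg : ConvexOn ℝ Set.univ g)
    (hdiff : ∀ x, HasGradientAt f (f' x) x)
    (hsc : ConvexOn ℝ Set.univ (fun x => f x - σ / 2 * ‖x‖ ^ 2))
    (hsm : ConvexOn ℝ Set.univ (fun x => L / 2 * ‖x‖ ^ 2 - f x))
    (y p : E)
    (hmin : ∀ u : E,
      f y + ⟪f' y, p - y⟫ + g p + L / 2 * ‖p - y‖ ^ 2 ≤
      f y + ⟪f' y, u - y⟫ + g u + L / 2 * ‖u - y‖ ^ 2) :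
    ∀ x : E, (f x + g x) - (f p + g p) ≥
      L / 2 * ‖x - p‖ ^ 2 - L / 2 * ‖x - y‖ ^ 2 + σ / 2 * ‖x - y‖ ^ 2 := by
  intro x
  have hA := strong_tangent σ hsc (hdiff y) x
  have hB := smooth_tangent L hsm (hdiff y) p
  have hmin' : ∀ u, ⟪f' y, p - y⟫ + g p + L / 2 * ‖p - y‖ ^ 2 ≤
      ⟪f' y, u - y⟫ + g u + L / 2 * ‖u - y‖ ^ 2 := fun u => by have := hmin u; linarith
  have hQ := min_strong g (f' y) y p L hg hmin' x
  linarith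
end

section
/- Let E be a real inner product space and let σ, L, t be real numbers with σ > 0, t ≥ 1, and σ·t < L. Then for any vectors x, x*, A ∈ E: (L − σ)/2 · ‖t·A − (x* + (t−1)·x)‖² − σ(t−1)/2 · ‖x − x*‖² ≤ (L − σt)/2 · ‖x − x* + ((L − σ)/(L − σt))·t·(A − x)‖². -/
/-- Eq. (4.19): the key norm inequality used in the linear convergence proof. -/
theorem stmt_7 {E : Type*} [NormedAddCommGroup E] [InnerProductSpace ℝ E]
    (σ L t : ℝ) (hσ : 0 < σ) (ht : 1 ≤ t) (hLt : σ * t < L)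
    (x xstar A : E) :
    (L - σ) / 2 * ‖t • A - (xstar + (t - 1) • x)‖ ^ 2
        - σ * (t - 1) / 2 * ‖x - xstar‖ ^ 2 ≤
      (L - σ * t) / 2 * ‖x - xstar + ((L - σ) / (L - σ * t) * t) • (A - x)‖ ^ 2 := by
  have hLt' : 0 < L - σ * t := by linarith
  have hLσ : 0 < L - σ := by nlinarith
  set u := x - xstar with hu
  set v := t • (A - x) with hv
  have h1 : t • A - (xstar + (t - 1) • x) = u + v := by
    rw [hu, hv]; module
  have h2 : ((L - σ) / (L - σ * t) * t) • (A - x) = ((L - σ) / (L - σ * t)) • v := by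
    rw [hv, smul_smul, mul_comm]
  rw [h1, h2]
  set c := (L - σ) / (L - σ * t) with hc
  have hcc : c * (L - σ * t) = L - σ := by
    rw [hc]; exact div_mul_cancel₀ _ hLt'.ne'
  have hc1 : 1 ≤ c := by
    rw [hc]
    rw [le_div_iff₀ hLt']
    nlinarith
  have e1 : ‖u + v‖ ^ 2 = ‖u‖ ^ 2 + 2 * inner ℝ u v + ‖v‖ ^ 2 := by
    rw [norm_add_sq_real]
  have e2 : ‖u + c • v‖ ^ 2 = ‖u‖ ^ 2 + 2 * (c * inner ℝ u v) + c ^ 2 * ‖v‖ ^ 2 := by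
    rw [norm_add_sq_real, real_inner_smul_right, norm_smul, mul_pow]
    rw [Real.norm_eq_abs, abs_of_pos (by positivity : (0:ℝ) < c)]
  rw [e1, e2]
  have hv2 : (0:ℝ) ≤ ‖v‖ ^ 2 := by positivity
  have key : (L - σ * t) * c = L - σ := by rw [mul_comm]; exact hcc
  have keyb : (L - σ * t) * (c * inner ℝ u v) = (L - σ) * inner ℝ u v := by
    rw [← key]; ring
  have key2 : (L - σ) ≤ (L - σ * t) * c ^ 2 := by nlinarith
  have keyw := mul_le_mul_of_nonneg_right key2 hv2
  nlinarith [keyb, keyw]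
end

section
/- Let E be a real Hilbert space, g : E → ℝ convex, and f : E → ℝ differentiable with gradient ∇f, σ-strongly convex and L-smooth with 0 < σ < L; set F = f + g, t = √(L/σ). Let P* be a minimizer of F over E and define V(x) = F(x) − F(P*). Fix P^{k−1}, P^k ∈ E, let A = P^k + ((t−1)/(t+1))·(P^k − P^{k−1}), and let P^{k+1} be a minimizer over E of u ↦ f(A) + ⟨∇f(A), u − A⟩ + (L/2)‖u − A‖² + g(u). Then: V(P^{k+1}) + (σ/2)‖t·P^{k+1} − (P* + (t−1)·P^k)‖² ≤ (1 − 1/t)·(V(P^k) + (σ/2)‖t·P^k − (P* + (t−1)·P^{k−1})‖²). -/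
open RealInnerProductSpace

section Aux

variable {E : Type*} [NormedAddCommGroup E] [InnerProductSpace ℝ E]

private lemma convex_dir' {h : E → ℝ} (hconv : ConvexOn ℝ Set.univ h) (x v : E) (D : ℝ)
    (hd : HasDerivAt (fun s : ℝ => h (x + s • v)) D 0) : D ≤ h (x + v) - h x := by
  have ht := hasDerivAt_iff_tendsto_slope.1 hd
  have hsub : Set.Ioi (0:ℝ) ⊆ {(0:ℝ)}ᶜ := fun s hs => ne_of_gt hs
  have ht' := ht.mono_left (nhdsWithin_mono _ hsub)
  refine le_of_tendsto ht' ?_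
  filter_upwards [Ioc_mem_nhdsGT_of_mem ⟨le_refl (0:ℝ), one_pos⟩] with s hs
  have hs0 : 0 < s := hs.1
  have hs1 : s ≤ 1 := hs.2
  have hcomb : h (x + s • v) ≤ (1 - s) * h x + s * h (x + v) := by
    have := hconv.2 (Set.mem_univ x) (Set.mem_univ (x + v))
      (by linarith : (0:ℝ) ≤ 1 - s) (le_of_lt hs0) (by ring)
    have he : (1 - s) • x + s • (x + v) = x + s • v := by module
    rwa [he] at this
  have heq : slope (fun s : ℝ => h (x + s • v)) 0 s
      = (h (x + s • v) - h (x + (0:ℝ) • v)) / s := by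
    simp [slope_def_field, div_eq_inv_mul]
  rw [heq]
  simp only [zero_smul, add_zero]
  rw [div_le_iff₀ hs0]
  nlinarith [hcomb]

private lemma quad_conv_ineq' {f : E → ℝ} [CompleteSpace E] {fx' : E} {x : E} (a c : ℝ)
    (hconv : ConvexOn ℝ Set.univ (fun z => a * f z + c * ‖z‖ ^ 2))
    (hd : HasGradientAt f fx' x) (y : E) :
    a * f x + c * ‖x‖ ^ 2 + (a * ⟪fx', y - x⟫ + 2 * c * ⟪x, y - x⟫)
      ≤ a * f y + c * ‖y‖ ^ 2 := by
  set v := y - x with hv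
  have hdf : HasDerivAt (fun s : ℝ => f (x + s • v)) ⟪fx', v⟫ 0 := by
    have hF := hasGradientAt_iff_hasFDerivAt.1 hd
    have hF' : HasFDerivAt f ((InnerProductSpace.toDual ℝ E) fx') ((0:ℝ) • v + x) := by
      simpa using hF
    have := hF'.comp_hasDerivAt (f := fun s : ℝ => s • v + x) (0:ℝ) (by
      simpa using ((hasDerivAt_id (0:ℝ)).smul_const v).add_const x)
    have h2 : (fun s : ℝ => f (x + s • v)) = f ∘ fun s : ℝ => s • v + x := by
      funext s; simp [Function.comp, add_comm]
    rw [h2]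
    simpa [InnerProductSpace.toDual_apply_apply] using this
  have heq : (fun s : ℝ => ‖x + s • v‖ ^ 2)
      = fun s : ℝ => ‖x‖ ^ 2 + 2 * ⟪x, v⟫ * s + ‖v‖ ^ 2 * s ^ 2 := by
    funext s
    rw [norm_add_sq_real, real_inner_smul_right, norm_smul]
    simp [Real.norm_eq_abs, mul_pow, sq_abs]
    ring
  have hdn : HasDerivAt (fun s : ℝ => ‖x + s • v‖ ^ 2) (2 * ⟪x, v⟫) 0 := by
    rw [heq]
    have h1 : HasDerivAt (fun s : ℝ => ‖x‖ ^ 2 + 2 * ⟪x, v⟫ * s + ‖v‖ ^ 2 * s ^ 2)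
        (0 + 2 * ⟪x, v⟫ * 1 + ‖v‖ ^ 2 * (2 * 0 ^ 1)) 0 :=
      (((hasDerivAt_const (0:ℝ) (‖x‖^2)).add
        ((hasDerivAt_id (0:ℝ)).const_mul (2 * ⟪x, v⟫))).add
        ((hasDerivAt_pow 2 (0:ℝ)).const_mul (‖v‖^2)))
    simpa using h1
  have hdfull : HasDerivAt (fun s : ℝ => a * f (x + s • v) + c * ‖x + s • v‖ ^ 2)
      (a * ⟪fx', v⟫ + c * (2 * ⟪x, v⟫)) 0 := (hdf.const_mul a).add (hdn.const_mul c)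
  have hkey := convex_dir' hconv x v _ hdfull
  have hxv : x + v = y := by rw [hv]; abel
  rw [hxv] at hkey
  linarith [hkey]

private lemma norm_smul_add_smul_sq' (c d : ℝ) (a b : E) :
    ‖c • a + d • b‖ ^ 2 = c ^ 2 * ⟪a, a⟫ + 2 * (c * d) * ⟪a, b⟫ + d ^ 2 * ⟪b, b⟫ := by
  simp only [← real_inner_self_eq_norm_sq, inner_add_left, inner_add_right,
    real_inner_smul_left, real_inner_smul_right]
  rw [real_inner_comm b a]
  ring

private lemma norm_sq_split' (x y : E) :
    ‖y‖ ^ 2 = ‖x‖ ^ 2 + 2 * ⟪x, y - x⟫ + ‖y - x‖ ^ 2 := by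
  have h := norm_add_sq_real x (y - x)
  rwa [show x + (y - x) = y from by abel] at h

end Aux

set_option maxHeartbeats 1600000 in
/-- Eq. (4.22): the one-step contraction inequality underlying the linear
convergence of the accelerated proximal-gradient algorithm. -/
theorem stmt_9 {E : Type*} [NormedAddCommGroup E] [InnerProductSpace ℝ E] [CompleteSpace E]
    (f g : E → ℝ) (f' : E → E) (σ L : ℝ)
    (hσ : 0 < σ) (hσL : σ < L)
    (hg : ConvexOn ℝ Set.univ g)
    (hdiff : ∀ x, HasGradientAt f (f' x) x)
    (hsc : ConvexOn ℝ Set.univ (fun x => f x - σ / 2 * ‖x‖ ^ 2))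
    (hsm : ConvexOn ℝ Set.univ (fun x => L / 2 * ‖x‖ ^ 2 - f x))
    (Pstar : E) (hPstar : ∀ x : E, f Pstar + g Pstar ≤ f x + g x)
    (Pkm Pk Pk1 : E) :
    let t := Real.sqrt (L / σ)
    let A := Pk + ((t - 1) / (t + 1)) • (Pk - Pkm)
    let V := fun x : E => (f x + g x) - (f Pstar + g Pstar)
    (∀ u : E,
      f A + ⟪f' A, Pk1 - A⟫ + L / 2 * ‖Pk1 - A‖ ^ 2 + g Pk1 ≤
      f A + ⟪f' A, u - A⟫ + L / 2 * ‖u - A‖ ^ 2 + g u) →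
    V Pk1 + σ / 2 * ‖t • Pk1 - (Pstar + (t - 1) • Pk)‖ ^ 2 ≤
      (1 - 1 / t) * (V Pk + σ / 2 * ‖t • Pk - (Pstar + (t - 1) • Pkm)‖ ^ 2) := by
  intro t A V hmin
  have hA : A = Pk + ((t - 1) / (t + 1)) • (Pk - Pkm) := rfl
  have hV : ∀ x, V x = (f x + g x) - (f Pstar + g Pstar) := fun _ => rfl
  have hL : 0 < L := hσ.trans hσL
  have htσ : (0:ℝ) < L / σ := by positivity
  have ht2 : t ^ 2 = L / σ := Real.sq_sqrt htσ.le
  have ht1 : 1 < t := by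
    have h1 : (1:ℝ) < L / σ := (one_lt_div hσ).2 hσL
    nlinarith [Real.sqrt_nonneg (L/σ), ht2]
  have ht0 : 0 < t := lt_trans one_pos ht1
  set θ : ℝ := 1 / t with hθdef
  have hθ0 : 0 < θ := by positivity
  have hθ1 : θ < 1 := by rw [hθdef, div_lt_one ht0]; exact ht1
  have htθ : t * θ = 1 := by rw [hθdef]; field_simp
  have hLσ : σ * t ^ 2 = L := by rw [ht2]; field_simp
  have hβ : (t - 1) / (t + 1) = (1 - θ) / (1 + θ) := by
    rw [hθdef]
    rw [div_eq_div_iff (by linarith) (by positivity)]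
    field_simp
  set u : E := θ • Pstar + (1 - θ) • Pk with hu
  set w : E := θ • Pstar + (1 - θ) • Pkm with hw
  -- first-order inequality from strong convexity
  have hsc' : ∀ x y : E, f x + ⟪f' x, y - x⟫ + σ/2 * ‖y - x‖^2 ≤ f y := by
    intro x y
    have hconv : ConvexOn ℝ Set.univ (fun z : E => (1:ℝ) * f z + (-(σ/2)) * ‖z‖^2) := by
      have e : (fun z : E => (1:ℝ) * f z + (-(σ/2)) * ‖z‖^2)
          = fun z : E => f z - σ/2 * ‖z‖^2 := by funext z; ring
      rw [e]; exact hsc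
    have h1 := quad_conv_ineq' 1 (-(σ/2)) hconv (hdiff x) y
    have hid := norm_sq_split' x y
    have hid2 : σ/2 * ‖y‖^2 = σ/2 * (‖x‖^2 + 2 * ⟪x, y - x⟫ + ‖y - x‖^2) := by rw [← hid]
    linarith [h1, hid2]
  -- first-order inequality from smoothness
  have hsm' : ∀ x y : E, f y ≤ f x + ⟪f' x, y - x⟫ + L/2 * ‖y - x‖^2 := by
    intro x y
    have hconv : ConvexOn ℝ Set.univ (fun z : E => (-1:ℝ) * f z + (L/2) * ‖z‖^2) := by
      have e : (fun z : E => (-1:ℝ) * f z + (L/2) * ‖z‖^2)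
          = fun z : E => L/2 * ‖z‖^2 - f z := by funext z; ring
      rw [e]; exact hsm
    have h1 := quad_conv_ineq' (-1) (L/2) hconv (hdiff x) y
    have hid := norm_sq_split' x y
    have hid2 : L/2 * ‖y‖^2 = L/2 * (‖x‖^2 + 2 * ⟪x, y - x⟫ + ‖y - x‖^2) := by rw [← hid]
    linarith [h1, hid2]
  -- strong minimality of Pk1 in the proximal subproblem, at the point u
  have hsmin : f A + ⟪f' A, Pk1 - A⟫ + L/2 * ‖Pk1 - A‖^2 + g Pk1 + L/2 * ‖u - Pk1‖^2
      ≤ f A + ⟪f' A, u - A⟫ + L/2 * ‖u - A‖^2 + g u := by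
    have hC : 0 ≤ ⟪f' A, u - Pk1⟫ + L * ⟪Pk1 - A, u - Pk1⟫ + g u - g Pk1 := by
      refine le_of_forall_pos_le_add ?_
      intro ε hε
      by_cases hz : ‖u - Pk1‖ = 0
      · have hz' : u - Pk1 = 0 := norm_eq_zero.1 hz
        have hu' : u = Pk1 := by rwa [sub_eq_zero] at hz'
        rw [hz', hu']
        simp
        all_goals linarith
      · have hnz : 0 < ‖u - Pk1‖ := lt_of_le_of_ne (norm_nonneg _) (Ne.symm hz)
        set d := ‖u - Pk1‖^2 with hd
        have hd0 : 0 < d := by positivity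
        set c := L/2 * d with hc
        have hc0 : 0 < c := by positivity
        set lam := min 1 (ε / c) with hlamdef
        have hlam0 : 0 < lam := lt_min one_pos (div_pos hε hc0)
        have hlam1 : lam ≤ 1 := min_le_left _ _
        have hmv := hmin (Pk1 + lam • (u - Pk1))
        have e1 : ⟪f' A, (Pk1 + lam • (u - Pk1)) - A⟫
            = ⟪f' A, Pk1 - A⟫ + lam * ⟪f' A, u - Pk1⟫ := by
          rw [show (Pk1 + lam • (u - Pk1)) - A = (Pk1 - A) + lam • (u - Pk1) from by abel,
            inner_add_right, real_inner_smul_right]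
        have e2 : ‖(Pk1 + lam • (u - Pk1)) - A‖^2
            = ‖Pk1 - A‖^2 + 2 * lam * ⟪Pk1 - A, u - Pk1⟫ + lam^2 * d := by
          rw [show (Pk1 + lam • (u - Pk1)) - A = (Pk1 - A) + lam • (u - Pk1) from by abel,
            norm_add_sq_real, real_inner_smul_right, norm_smul]
          simp [Real.norm_eq_abs, mul_pow, sq_abs, hd]
          ring
        have e3 : g (Pk1 + lam • (u - Pk1)) ≤ (1 - lam) * g Pk1 + lam * g u := by
          have h3 := hg.2 (Set.mem_univ Pk1) (Set.mem_univ u) (by linarith : (0:ℝ) ≤ 1 - lam)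
            hlam0.le (by ring)
          have he : (1 - lam) • Pk1 + lam • u = Pk1 + lam • (u - Pk1) := by module
          rw [he] at h3
          simpa using h3
        have hkey : 0 ≤ lam * (⟪f' A, u - Pk1⟫ + L * ⟪Pk1 - A, u - Pk1⟫ + g u - g Pk1)
            + L/2 * (lam^2 * d) := by
          rw [e1, e2] at hmv
          linarith [hmv, e3]
        have hlc : lam * (L/2 * (lam * d)) ≤ lam * ε := by
          have h5 : lam ≤ ε / c := min_le_right _ _
          have h6 : L/2 * (lam * d) ≤ ε := by
            rw [show L/2 * (lam * d) = lam * c from by rw [hc]; ring]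
            calc lam * c ≤ (ε / c) * c := by
                  exact mul_le_mul_of_nonneg_right h5 hc0.le
              _ = ε := by field_simp
          exact mul_le_mul_of_nonneg_left h6 hlam0.le
        have h7 : 0 ≤ lam * ((⟪f' A, u - Pk1⟫ + L * ⟪Pk1 - A, u - Pk1⟫ + g u - g Pk1) + ε) := by
          nlinarith [hkey, hlc]
        linarith [(mul_nonneg_iff_of_pos_left hlam0).mp h7]
    have eu1 : ⟪f' A, u - A⟫ = ⟪f' A, Pk1 - A⟫ + ⟪f' A, u - Pk1⟫ := by
      rw [show u - A = (Pk1 - A) + (u - Pk1) from by abel, inner_add_right]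
    have eu2 : ‖u - A‖^2 = ‖Pk1 - A‖^2 + 2 * ⟪Pk1 - A, u - Pk1⟫ + ‖u - Pk1‖^2 := by
      rw [show u - A = (Pk1 - A) + (u - Pk1) from by abel, norm_add_sq_real]
    have eu2' : L/2 * ‖u - A‖^2
        = L/2 * (‖Pk1 - A‖^2 + 2 * ⟪Pk1 - A, u - Pk1⟫ + ‖u - Pk1‖^2) := by rw [← eu2]
    linarith [hC, eu1, eu2']
  -- combine with smoothness and strong convexity at A
  have h1 : (f Pk1 + g Pk1) + L/2 * ‖u - Pk1‖^2
      ≤ (f u + g u) + (L - σ)/2 * ‖u - A‖^2 := by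
    have h2 := hsm' A Pk1
    have h3 := hsc' A u
    linarith [hsmin, h2, h3]
  -- strong convexity of F along the segment [Pstar, Pk]
  have h4 : f u + g u ≤ θ * (f Pstar + g Pstar) + (1 - θ) * (f Pk + g Pk)
      - σ/2 * θ * (1 - θ) * ‖Pstar - Pk‖^2 := by
    have hgc := hg.2 (Set.mem_univ Pstar) (Set.mem_univ Pk) hθ0.le
      (by linarith : (0:ℝ) ≤ 1 - θ) (by ring)
    have hfc := hsc.2 (Set.mem_univ Pstar) (Set.mem_univ Pk) hθ0.le
      (by linarith : (0:ℝ) ≤ 1 - θ) (by ring)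
    simp only [smul_eq_mul] at hgc hfc
    rw [← hu] at hgc hfc
    have hcomb : ‖u‖^2 = θ * ‖Pstar‖^2 + (1 - θ) * ‖Pk‖^2
        - θ * (1 - θ) * ‖Pstar - Pk‖^2 := by
      rw [hu]
      simp only [← real_inner_self_eq_norm_sq, inner_add_left, inner_add_right,
        inner_sub_left, inner_sub_right, real_inner_smul_left, real_inner_smul_right]
      rw [real_inner_comm Pk Pstar]
      ring
    have hcomb2 : σ/2 * ‖u‖^2 = σ/2 * (θ * ‖Pstar‖^2 + (1 - θ) * ‖Pk‖^2
        - θ * (1 - θ) * ‖Pstar - Pk‖^2) := by rw [← hcomb]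
    linarith [hgc, hfc, hcomb2]
  -- vector identities
  have hvecUA : u - A = θ • (Pstar - Pk) + ((1 - θ)/(1 + θ)) • (Pkm - Pk) := by
    rw [hu, hA, hβ]; module
  have hvecKW : Pk - w = (-θ) • (Pstar - Pk) + (-(1 - θ)) • (Pkm - Pk) := by
    rw [hw]; module
  have nUA : ‖u - A‖^2 = θ^2 * ⟪Pstar - Pk, Pstar - Pk⟫
      + 2 * (θ * ((1 - θ)/(1 + θ))) * ⟪Pstar - Pk, Pkm - Pk⟫
      + ((1 - θ)/(1 + θ))^2 * ⟪Pkm - Pk, Pkm - Pk⟫ := by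
    rw [hvecUA, norm_smul_add_smul_sq']
  have nKW : ‖Pk - w‖^2 = θ^2 * ⟪Pstar - Pk, Pstar - Pk⟫
      + 2 * (θ * (1 - θ)) * ⟪Pstar - Pk, Pkm - Pk⟫
      + (1 - θ)^2 * ⟪Pkm - Pk, Pkm - Pk⟫ := by
    rw [hvecKW, norm_smul_add_smul_sq']; ring
  have naa : ‖Pstar - Pk‖^2 = ⟪Pstar - Pk, Pstar - Pk⟫ :=
    (real_inner_self_eq_norm_sq _).symm
  have hbb : 0 ≤ ⟪Pkm - Pk, Pkm - Pk⟫ := real_inner_self_nonneg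
  -- key scalar inequality
  have hkey6 : (L - σ)/2 * ‖u - A‖^2
      ≤ σ/2 * θ * (1 - θ) * ‖Pstar - Pk‖^2 + (1 - θ) * (L/2) * ‖Pk - w‖^2 := by
    rw [nUA, nKW, naa]
    have hLθ : L * θ^2 = σ := by
      calc L * θ^2 = σ * (t * θ)^2 := by rw [← hLσ]; ring
        _ = σ := by rw [htθ]; ring
    have hL' : L = σ / θ^2 := by
      rw [← hLθ]; field_simp
    set aa := ⟪Pstar - Pk, Pstar - Pk⟫ with haa
    set ab := ⟪Pstar - Pk, Pkm - Pk⟫ with hab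
    set bb := ⟪Pkm - Pk, Pkm - Pk⟫ with hbbdef
    rw [hL']
    have hident : σ/2 * θ * (1 - θ) * aa
        + (1 - θ) * ((σ / θ^2)/2) * (θ^2 * aa + 2 * (θ * (1 - θ)) * ab + (1 - θ)^2 * bb)
        - ((σ / θ^2) - σ)/2 * (θ^2 * aa + 2 * (θ * ((1 - θ)/(1 + θ))) * ab
          + ((1 - θ)/(1 + θ))^2 * bb)
        = σ * (1 - θ)^3 / (2 * θ * (1 + θ)) * bb := by
      have hθne : θ ≠ 0 := hθ0.ne'
      have h1θ : (1:ℝ) + θ ≠ 0 := by positivity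
      field_simp
      ring
    have hpos : 0 ≤ σ * (1 - θ)^3 / (2 * θ * (1 + θ)) * bb := by
      apply mul_nonneg _ hbb
      apply div_nonneg
      · exact mul_nonneg hσ.le (pow_nonneg (by linarith) 3)
      · positivity
    linarith [hident, hpos]
  -- norm identities for the goal
  have hts : ∀ z : E, t • (θ • z) = z := fun z => by
    rw [smul_smul, htθ, one_smul]
  have ht1s : ∀ z : E, t • ((1 - θ) • z) = (t - 1) • z := fun z => by
    rw [smul_smul]
    congr 1
    rw [hθdef]
    field_simp
  have gnorm1 : ‖t • Pk1 - (Pstar + (t - 1) • Pk)‖^2 = t^2 * ‖Pk1 - u‖^2 := by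
    have hv : t • Pk1 - (Pstar + (t - 1) • Pk) = t • (Pk1 - u) := by
      rw [hu, smul_sub, smul_add, hts, ht1s]
    rw [hv, norm_smul]
    simp [Real.norm_eq_abs, mul_pow, sq_abs]
  have gnorm2 : ‖t • Pk - (Pstar + (t - 1) • Pkm)‖^2 = t^2 * ‖Pk - w‖^2 := by
    have hv : t • Pk - (Pstar + (t - 1) • Pkm) = t • (Pk - w) := by
      rw [hw, smul_sub, smul_add, hts, ht1s]
    rw [hv, norm_smul]
    simp [Real.norm_eq_abs, mul_pow, sq_abs]
  have e5 : σ/2 * (t^2 * ‖Pk1 - u‖^2) = L/2 * ‖u - Pk1‖^2 := by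
    rw [show ‖Pk1 - u‖ = ‖u - Pk1‖ from norm_sub_rev _ _]
    linear_combination (‖u - Pk1‖^2 / 2) * hLσ
  have e6 : σ/2 * (t^2 * ‖Pk - w‖^2) = L/2 * ‖Pk - w‖^2 := by
    linear_combination (‖Pk - w‖^2 / 2) * hLσ
  have e6' : (1 - θ) * (σ/2 * (t^2 * ‖Pk - w‖^2)) = (1 - θ) * (L/2 * ‖Pk - w‖^2) := by
    rw [e6]
  rw [hV Pk1, hV Pk, gnorm1, gnorm2]
  linarith [h1, h4, hkey6, e5, e6']
end
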